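/- Define δ₂(u,c,p,m) := (1-p)(1 - c^{2m-1})u² + 2c(1 - c^{2m-2})u + 2pc(1 - c^{2m-1}) + c²(1 - c^{2m-3}). Then δ₂(u,c,p,m) ≥ 0 for all u ∈ [-c, 0], c ∈ (0,1), m ≥ 1, and p ∈ [p_*(m), 1), where p_*(m) := (2m+1 - √(4(m-1)(m+2)+1))/(4(2m-1)). -/

import Mathlib

open Real

lemma aux_sinh_le (x : ℝ) (hx : 0 ≤ x) : Real.sinh x ≤ x * Real.cosh x := by
  have hd : ∀ y : ℝ, HasDerivAt (fun z => z * Real.cosh z - Real.sinh z) (y * Real.sinh y) y := by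
    intro y
    have h1 := ((hasDerivAt_id y).mul (Real.hasDerivAt_cosh y)).sub (Real.hasDerivAt_sinh y)
    exact h1.congr_deriv (by simp)
  have mono : MonotoneOn (fun z => z * Real.cosh z - Real.sinh z) (Set.Ici 0) := by
    apply monotoneOn_of_deriv_nonneg (convex_Ici 0)
    · exact (Continuous.continuousOn (by continuity))
    · intro y hy
      exact (hd y).differentiableAt.differentiableWithinAt
    · intro y hy
      rw [interior_Ici] at hy
      rw [(hd y).deriv]
      exact mul_nonneg (le_of_lt hy) (Real.sinh_nonneg_iff.2 (le_of_lt hy))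
  have h0 := mono (Set.self_mem_Ici) (Set.mem_Ici.2 hx) hx
  simp at h0
  linarith

lemma aux_sinh_mul (k x : ℝ) (hk : 1 ≤ k) (hx : 0 ≤ x) :
    k * Real.sinh x ≤ Real.sinh (k * x) := by
  have h1 : k * x = (k - 1) * x + x := by ring
  rw [h1, Real.sinh_add]
  have hky : 0 ≤ (k - 1) * x := mul_nonneg (by linarith) hx
  have hs1 : (k - 1) * x ≤ Real.sinh ((k - 1) * x) := Real.self_le_sinh_iff.2 hky
  have hc1 : 1 ≤ Real.cosh x := Real.one_le_cosh x
  have hc2 : 1 ≤ Real.cosh ((k - 1) * x) := Real.one_le_cosh _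
  have hsx : 0 ≤ Real.sinh x := Real.sinh_nonneg_iff.2 hx
  have haux := aux_sinh_le x hx
  nlinarith [mul_le_mul_of_nonneg_right hs1 (by linarith : (0:ℝ) ≤ Real.cosh x),
    mul_le_mul_of_nonneg_left haux (by linarith : (0:ℝ) ≤ k - 1),
    mul_le_mul_of_nonneg_right hc2 hsx]

lemma aux_rpow (c k : ℝ) (hc0 : 0 < c) (hc1 : c < 1) (hk : 1 ≤ k) :
    k * (1 - c) * c ^ ((k - 1) / 2) ≤ 1 - c ^ k := by
  have hlog : Real.log c < 0 := Real.log_neg hc0 hc1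
  set x := -(Real.log c) / 2 with hxdef
  have hx0 : 0 ≤ x := by rw [hxdef]; linarith
  have hL : Real.log c = -2 * x := by rw [hxdef]; ring
  have h2 := aux_sinh_mul k x hk hx0
  rw [Real.sinh_eq, Real.sinh_eq] at h2
  have e1 : c ^ ((k - 1) / 2) = Real.exp x * Real.exp (-(k * x)) := by
    rw [Real.rpow_def_of_pos hc0, hL, ← Real.exp_add]; ring_nf
  have e2 : c ^ k = Real.exp (-(k * x)) * Real.exp (-(k * x)) := by
    rw [Real.rpow_def_of_pos hc0, hL, ← Real.exp_add]; ring_nf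
  have e3 : c = Real.exp (-x) * Real.exp (-x) := by
    rw [← Real.exp_add]
    nth_rewrite 1 [← Real.exp_log hc0]
    rw [hL]; ring_nf
  rw [e1, e2]
  nth_rewrite 1 [e3]
  have hab : Real.exp x * Real.exp (-x) = 1 := by rw [← Real.exp_add]; simp
  have hcd : Real.exp (k * x) * Real.exp (-(k * x)) = 1 := by rw [← Real.exp_add]; simp
  have hD : 0 < Real.exp (-(k * x)) := Real.exp_pos _
  have hA : 0 < Real.exp x := Real.exp_pos _
  have hB : 0 < Real.exp (-x) := Real.exp_pos _
  have h3 : k * (Real.exp x - Real.exp (-x)) ≤ Real.exp (k * x) - Real.exp (-(k * x)) := by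
    linarith
  have h4 := mul_le_mul_of_nonneg_right h3 hD.le
  have key : k * (1 - Real.exp (-x) * Real.exp (-x)) * (Real.exp x * Real.exp (-(k * x)))
      = k * (Real.exp x - Real.exp (-x)) * Real.exp (-(k * x)) := by
    linear_combination (-(k * Real.exp (-x) * Real.exp (-(k * x)))) * hab
  have key2 : (Real.exp (k * x) - Real.exp (-(k * x))) * Real.exp (-(k * x))
      = 1 - Real.exp (-(k * x)) * Real.exp (-(k * x)) := by
    linear_combination hcd
  linarith [h4, key.le, key.ge, key2.le, key2.ge]

lemma aux_pstar_anti (a b : ℝ) (ha : 1 ≤ a) (hab : a ≤ b) :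
    (b + 2 - Real.sqrt ((b + 2) ^ 2 - 8)) / (4 * b) ≤
      (a + 2 - Real.sqrt ((a + 2) ^ 2 - 8)) / (4 * a) := by
  have hEa : (0:ℝ) ≤ (a + 2) ^ 2 - 8 := by nlinarith
  have hEb : (0:ℝ) ≤ (b + 2) ^ 2 - 8 := by nlinarith
  have hsa := Real.sq_sqrt hEa
  have hsb := Real.sq_sqrt hEb
  have hsa0 := Real.sqrt_nonneg ((a + 2) ^ 2 - 8)
  have hsb0 := Real.sqrt_nonneg ((b + 2) ^ 2 - 8)
  have hsab : Real.sqrt ((a + 2) ^ 2 - 8) ≤ Real.sqrt ((b + 2) ^ 2 - 8) :=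
    Real.sqrt_le_sqrt (by nlinarith)
  have h1 : Real.sqrt ((a + 2) ^ 2 - 8) < a + 2 := by nlinarith
  have h2 : Real.sqrt ((b + 2) ^ 2 - 8) < b + 2 := by nlinarith
  set sa := Real.sqrt ((a + 2) ^ 2 - 8) with hsadef
  set sb := Real.sqrt ((b + 2) ^ 2 - 8) with hsbdef
  have hfa : (a + 2 - sa) * (a + 2 + sa) = 8 := by linear_combination -hsa
  have hfb : (b + 2 - sb) * (b + 2 + sb) = 8 := by linear_combination -hsb
  have hPa : (0:ℝ) < a + 2 + sa := by linarith
  have hPb : (0:ℝ) < b + 2 + sb := by linarith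
  have hPab : a * (a + 2 + sa) ≤ b * (b + 2 + sb) := by nlinarith [hsab]
  rw [div_le_div_iff₀ (by linarith) (by linarith)]
  have l1 : ((b + 2 - sb) * (4 * a)) * ((a + 2 + sa) * (b + 2 + sb))
      = 32 * (a * (a + 2 + sa)) := by linear_combination (4 * a * (a + 2 + sa)) * hfb
  have l2 : ((a + 2 - sa) * (4 * b)) * ((a + 2 + sa) * (b + 2 + sb))
      = 32 * (b * (b + 2 + sb)) := by linear_combination (4 * b * (b + 2 + sb)) * hfa
  have hmul : ((b + 2 - sb) * (4 * a)) * ((a + 2 + sa) * (b + 2 + sb))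
      ≤ ((a + 2 - sa) * (4 * b)) * ((a + 2 + sa) * (b + 2 + sb)) := by
    rw [l1, l2]; linarith
  exact le_of_mul_le_mul_right hmul (mul_pos hPa hPb)

section polyaux

private lemma poly_disj (K p : ℝ) (h3 : (K + 2 - 4 * K * p) ^ 2 ≤ (K + 2) ^ 2 - 8) :
    2 * K ^ 2 * p ^ 2 - K * (K + 2) * p + 1 ≤ 0 := by nlinarith [h3]

private lemma poly_case1 (u c p y : ℝ) (hu1 : -c ≤ u) (hu2 : u ≤ 0)
    (hc0 : 0 < c) (hc1 : c < 1) (hy0 : 0 < y) (hy1 : y < 1) (hyc : y ≤ c)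
    (hp0 : 0 < p) (hp1 : p < 1)
    (hcase : c * (1 - p) * (1 - y) ≤ c - y) :
    0 ≤ (1 - p) * (1 - y) * u ^ 2 + 2 * (c - y) * u + 2 * p * c * (1 - y) + (c ^ 2 - y) := by
  have hpcy : y * (1 - c) ≤ p * c * (1 - y) := by nlinarith [hcase]
  have hfc : 0 ≤ p * c * (2 - c) * (1 - y) - y * (1 - c) ^ 2 := by
    nlinarith [mul_le_mul_of_nonneg_right hpcy (by linarith : (0:ℝ) ≤ 2 - c),
      mul_nonneg (mul_nonneg hy0.le (by linarith : (0:ℝ) ≤ 1 - c)) (by linarith : (0:ℝ) ≤ 1 - c)]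
  have hslope : 0 ≤ (1 - p) * (1 - y) * (u - c) + 2 * (c - y) := by
    nlinarith [mul_nonneg (mul_nonneg (by linarith : (0:ℝ) ≤ 1 - p)
      (by linarith : (0:ℝ) ≤ 1 - y)) (by linarith : (0:ℝ) ≤ u + c)]
  nlinarith [mul_nonneg (by linarith : (0:ℝ) ≤ u + c) hslope, hfc]

private lemma poly_hp2 (s t p : ℝ) (ht0 : 0 < t) (hts : t ≤ s) (hs1 : s < 1)
    (h2a : (1 - t ^ 2) * s + 2 * ((1 - s ^ 2) * t) ≤ 4 * p * ((1 - t ^ 2) * s)) :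
    t ^ 2 * (1 - s ^ 2) ≤ 2 * p * s ^ 2 * (1 - t ^ 2) := by
  have hs0 : 0 < s := lt_of_lt_of_le ht0 hts
  have hb1 : t ^ 2 * (1 - s ^ 2) ≤ s ^ 2 * (1 - t ^ 2) := by nlinarith
  have hsq : (0:ℝ) ≤ 1 - s ^ 2 := by nlinarith
  have hb2 : t ^ 2 * (1 - s ^ 2) ≤ s * t * (1 - s ^ 2) := by
    nlinarith [mul_nonneg (mul_nonneg ht0.le hsq) (by linarith : (0:ℝ) ≤ s - t)]
  have h := mul_le_mul_of_nonneg_right h2a (by linarith : (0:ℝ) ≤ s / 2)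
  nlinarith [h, hb1, hb2, mul_nonneg (sq_nonneg t) hsq]

private lemma poly_case2a (c p y : ℝ) (hc0 : 0 < c) (hc1 : c < 1)
    (hy0 : 0 < y) (hy1 : y < 1) (hyc : y ≤ c) (hp0 : 0 < p) (hp1 : p < 1)
    (hcase : c - y ≤ c * (1 - p) * (1 - y))
    (hp2 : y * (1 - c) ≤ 2 * p * c * (1 - y)) :
    0 ≤ (1 - p) * (1 - y) * (2 * p * c * (1 - y) + c ^ 2 - y) - (c - y) ^ 2 := by
  have hA : 0 ≤ (1 - p) * (1 - y) := mul_nonneg (by linarith) (by linarith)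
  nlinarith [mul_nonneg hA (by linarith : (0:ℝ) ≤ 2 * p * c * (1 - y) - y * (1 - c)),
    mul_nonneg (by linarith : (0:ℝ) ≤ c - y)
      (by nlinarith [hcase] : (0:ℝ) ≤ c * ((1 - p) * (1 - y)) - (c - y))]

private lemma poly_case2b (s t p : ℝ) (ht0 : 0 < t) (hts : t ≤ s) (hs1 : s < 1)
    (hp0 : 0 < p) (hp1 : p < 1)
    (h2b : 2 * p ^ 2 * ((1 - t ^ 2) * s) ^ 2
        - p * ((1 - t ^ 2) * s) * ((1 - t ^ 2) * s + 2 * ((1 - s ^ 2) * t))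
        + ((1 - s ^ 2) * t) ^ 2 ≤ 0) :
    0 ≤ (1 - p) * (1 - t ^ 2) * (2 * p * s ^ 2 * (1 - t ^ 2) + (s ^ 2) ^ 2 - t ^ 2)
        - (s ^ 2 - t ^ 2) ^ 2 := by
  have hs0 : 0 < s := lt_of_lt_of_le ht0 hts
  have hpos : 0 ≤ p * (s - t) ^ 2 * (1 - s ^ 2) * (1 - t ^ 2) := by
    have h1 : (0:ℝ) ≤ 1 - s ^ 2 := by nlinarith
    have h2 : (0:ℝ) ≤ 1 - t ^ 2 := by nlinarith
    positivity
  nlinarith [h2b, hpos]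

private lemma poly_final (u c p y : ℝ)
    (hA : 0 < (1 - p) * (1 - y))
    (hG : 0 ≤ (1 - p) * (1 - y) * (2 * p * c * (1 - y) + c ^ 2 - y) - (c - y) ^ 2) :
    0 ≤ (1 - p) * (1 - y) * u ^ 2 + 2 * (c - y) * u + 2 * p * c * (1 - y) + (c ^ 2 - y) := by
  have key : 4 * ((1 - p) * (1 - y)) * ((1 - p) * (1 - y) * u ^ 2 + 2 * (c - y) * u
        + 2 * p * c * (1 - y) + (c ^ 2 - y))
      = (2 * ((1 - p) * (1 - y)) * u + 2 * (c - y)) ^ 2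
        + 4 * ((1 - p) * (1 - y) * (2 * p * c * (1 - y) + c ^ 2 - y) - (c - y) ^ 2) := by
    ring
  have h5 : 0 ≤ 4 * ((1 - p) * (1 - y)) * ((1 - p) * (1 - y) * u ^ 2 + 2 * (c - y) * u
      + 2 * p * c * (1 - y) + (c ^ 2 - y)) := by
    rw [key]
    have := sq_nonneg (2 * ((1 - p) * (1 - y)) * u + 2 * (c - y))
    linarith
  exact (mul_nonneg_iff_of_pos_left (by linarith : (0:ℝ) < 4 * ((1 - p) * (1 - y)))).1 h5

end polyaux

theorem delta2_nonneg (u c p m : ℝ) (hu : u ∈ Set.Icc (-c) 0)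
    (hc : c ∈ Set.Ioo (0 : ℝ) 1) (hm : 1 ≤ m)
    (hp : (2 * m + 1 - Real.sqrt (4 * (m - 1) * (m + 2) + 1)) / (4 * (2 * m - 1)) ≤ p)
    (hp1 : p < 1) :
    0 ≤ (1 - p) * (1 - c ^ (2 * m - 1)) * u ^ 2 + 2 * c * (1 - c ^ (2 * m - 2)) * u
        + 2 * p * c * (1 - c ^ (2 * m - 1)) + c ^ 2 * (1 - c ^ (2 * m - 3)) := by
  obtain ⟨hu1, hu2⟩ := hu
  obtain ⟨hc0, hc1⟩ := hc
  obtain ⟨k, hkdef⟩ : ∃ k : ℝ, k = 2 * m - 1 := ⟨_, rfl⟩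
  have hk : 1 ≤ k := by rw [hkdef]; linarith
  have hp' : (k + 2 - Real.sqrt ((k + 2) ^ 2 - 8)) / (4 * k) ≤ p := by
    have e : 4 * (m - 1) * (m + 2) + 1 = (k + 2) ^ 2 - 8 := by rw [hkdef]; ring
    have e2 : 2 * m + 1 = k + 2 := by rw [hkdef]; ring
    rw [e, e2, ← hkdef] at hp
    exact hp
  have hEk : (0:ℝ) ≤ (k + 2) ^ 2 - 8 := by nlinarith
  have hsk := Real.sq_sqrt hEk
  have hsk0 := Real.sqrt_nonneg ((k + 2) ^ 2 - 8)
  have hskl : Real.sqrt ((k + 2) ^ 2 - 8) < k + 2 := by nlinarith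
  have hp0 : 0 < p :=
    lt_of_lt_of_le (div_pos (by linarith) (by linarith)) hp'
  set y : ℝ := c ^ (2 * m - 1) with hydef
  clear_value y
  have hy0 : 0 < y := by rw [hydef]; exact Real.rpow_pos_of_pos hc0 _
  have hy1 : y < 1 := by
    rw [hydef]; exact Real.rpow_lt_one hc0.le hc1 (by linarith)
  have hyc : y ≤ c := by
    have h := Real.rpow_le_rpow_of_exponent_ge hc0 hc1.le (show (1:ℝ) ≤ 2 * m - 1 by linarith)
    rw [Real.rpow_one] at h
    rw [hydef]; exact h
  set s : ℝ := Real.sqrt c with hsdef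
  clear_value s
  set t : ℝ := Real.sqrt y with htdef
  clear_value t
  have hs0 : 0 < s := by rw [hsdef]; exact Real.sqrt_pos.2 hc0
  have ht0 : 0 < t := by rw [htdef]; exact Real.sqrt_pos.2 hy0
  have hts : t ≤ s := by rw [hsdef, htdef]; exact Real.sqrt_le_sqrt hyc
  have hs1 : s < 1 := by
    rw [hsdef, show (1:ℝ) = Real.sqrt 1 by simp]
    exact Real.sqrt_lt_sqrt hc0.le hc1
  have hs2 : s ^ 2 = c := by rw [hsdef]; exact Real.sq_sqrt hc0.le
  have ht2 : t ^ 2 = y := by rw [htdef]; exact Real.sq_sqrt hy0.le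
  have hpow2 : c ^ (2 * m - 2) = y / c := by
    rw [hydef, show 2 * m - 2 = (2 * m - 1) - 1 by ring, Real.rpow_sub hc0, Real.rpow_one]
  have hpow3 : c ^ (2 * m - 3) = y / c ^ 2 := by
    rw [hydef, show 2 * m - 3 = (2 * m - 1) - 2 by ring, Real.rpow_sub hc0]
    norm_num [Real.rpow_natCast]
  have hhalf : c ^ ((k - 1) / 2) = t / s := by
    have h1 : c ^ ((k - 1) / 2) * c ^ ((1:ℝ) / 2) = c ^ (k / 2) := by
      rw [← Real.rpow_add hc0]; ring_nf
    have h2 : c ^ ((1:ℝ) / 2) = s := by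
      rw [hsdef, Real.sqrt_eq_rpow]
    have h3 : c ^ (k / 2) = t := by
      rw [htdef, hydef, Real.sqrt_eq_rpow, ← Real.rpow_mul hc0.le]
      congr 1
      rw [hkdef]; ring
    rw [← h2, ← h3, ← h1]
    field_simp
  have hKk : k * (1 - c) * t ≤ (1 - y) * s := by
    have h := aux_rpow c k hc0 hc1 hk
    rw [hhalf] at h
    have h' : k * (1 - c) * (t / s) ≤ 1 - c ^ k := h
    have hck : c ^ k = y := by rw [hydef, hkdef]
    rw [hck] at h'
    calc k * (1 - c) * t = (k * (1 - c) * (t / s)) * s := by field_simp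
      _ ≤ (1 - y) * s := by
          apply mul_le_mul_of_nonneg_right h' hs0.le
  set K : ℝ := (1 - y) * s / ((1 - c) * t) with hKdef
  clear_value K
  have hTpos : 0 < (1 - c) * t := mul_pos (by linarith) ht0
  have hSpos : 0 < (1 - y) * s := mul_pos (by linarith) hs0
  have hKT : K * ((1 - c) * t) = (1 - y) * s := by
    rw [hKdef]; exact div_mul_cancel₀ _ (ne_of_gt hTpos)
  have hkK : k ≤ K := by
    rw [hKdef, le_div_iff₀ hTpos]
    calc k * ((1 - c) * t) = k * (1 - c) * t := by ring
      _ ≤ (1 - y) * s := hKk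
  have hK1 : 1 ≤ K := le_trans hk hkK
  have hK0 : 0 < K := by linarith
  have hpK : (K + 2 - Real.sqrt ((K + 2) ^ 2 - 8)) / (4 * K) ≤ p :=
    le_trans (aux_pstar_anti k K hk hkK) hp'
  have hEK : (0:ℝ) ≤ (K + 2) ^ 2 - 8 := by nlinarith
  have hsK := Real.sq_sqrt hEK
  have hsK0 := Real.sqrt_nonneg ((K + 2) ^ 2 - 8)
  have hdisj : K + 2 ≤ 4 * K * p ∨ 2 * K ^ 2 * p ^ 2 - K * (K + 2) * p + 1 ≤ 0 := by
    have h1 : K + 2 - Real.sqrt ((K + 2) ^ 2 - 8) ≤ 4 * K * p := by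
      have := (div_le_iff₀ (by linarith : (0:ℝ) < 4 * K)).1 hpK
      linarith [this]
    by_cases hc2 : K + 2 ≤ 4 * K * p
    · exact Or.inl hc2
    · right
      push_neg at hc2
      have h2 : K + 2 - 4 * K * p ≤ Real.sqrt ((K + 2) ^ 2 - 8) := by linarith
      have h3 : (K + 2 - 4 * K * p) ^ 2 ≤ (K + 2) ^ 2 - 8 := by
        calc (K + 2 - 4 * K * p) ^ 2 ≤ Real.sqrt ((K + 2) ^ 2 - 8) ^ 2 := by
              apply sq_le_sq' (by linarith) h2
          _ = (K + 2) ^ 2 - 8 := hsK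
      exact poly_disj K p h3
  rw [hpow2, hpow3]
  have hgoal : (1 - p) * (1 - y) * u ^ 2 + 2 * c * (1 - y / c) * u
      + 2 * p * c * (1 - y) + c ^ 2 * (1 - y / c ^ 2)
      = (1 - p) * (1 - y) * u ^ 2 + 2 * (c - y) * u + 2 * p * c * (1 - y) + (c ^ 2 - y) := by
    field_simp
  rw [hgoal]
  have hA : 0 < (1 - p) * (1 - y) := mul_pos (by linarith) (by linarith)
  rcases le_or_gt (c * (1 - p) * (1 - y)) (c - y) with hcase | hcase
  · exact poly_case1 u c p y hu1 hu2 hc0 hc1 hy0 hy1 hyc hp0 hp1 hcase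
  · have hG : 0 ≤ (1 - p) * (1 - y) * (2 * p * c * (1 - y) + c ^ 2 - y) - (c - y) ^ 2 := by
      rcases hdisj with h2a | h2b
      · have h2a' : (1 - y) * s + 2 * ((1 - c) * t) ≤ 4 * p * ((1 - y) * s) := by
          have hmul := mul_le_mul_of_nonneg_right h2a hTpos.le
          calc (1 - y) * s + 2 * ((1 - c) * t)
              = K * ((1 - c) * t) + 2 * ((1 - c) * t) := by rw [hKT]
            _ = (K + 2) * ((1 - c) * t) := by ring
            _ ≤ 4 * K * p * ((1 - c) * t) := hmul
            _ = 4 * p * (K * ((1 - c) * t)) := by ring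
            _ = 4 * p * ((1 - y) * s) := by rw [hKT]
        rw [← hs2, ← ht2] at h2a'
        have hp2 : y * (1 - c) ≤ 2 * p * c * (1 - y) := by
          rw [← hs2, ← ht2]
          exact poly_hp2 s t p ht0 hts hs1 h2a'
        exact poly_case2a c p y hc0 hc1 hy0 hy1 hyc hp0 hp1 hcase.le hp2
      · have expand : (2 * K ^ 2 * p ^ 2 - K * (K + 2) * p + 1) * ((1 - c) * t) ^ 2
            = 2 * p ^ 2 * (K * ((1 - c) * t)) ^ 2
              - p * (K * ((1 - c) * t)) * (K * ((1 - c) * t) + 2 * ((1 - c) * t))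
              + ((1 - c) * t) ^ 2 := by ring
        rw [hKT] at expand
        have h2b2 : (2 * K ^ 2 * p ^ 2 - K * (K + 2) * p + 1) * ((1 - c) * t) ^ 2 ≤ 0 := by
          have hmul := mul_le_mul_of_nonneg_right h2b (sq_nonneg ((1 - c) * t))
          simpa using hmul
        rw [expand] at h2b2
        rw [← hs2, ← ht2] at h2b2 ⊢
        exact poly_case2b s t p ht0 hts hs1 hp0 hp1 (by linarith [h2b2])
    exact poly_final u c p y hA hG
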